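/- For the semidirect product E = ℤ² ⋊_φ ℤ given by a matrix φ ∈ GL(2,ℤ), if φ has no nonzero fixed vector in ℤ², then ℤ² (the fiber subgroup) is the unique normal subgroup of E isomorphic to ℤ ⊕ ℤ with infinite cyclic quotient. -/

import Mathlib

open Matrix

/-- The automorphism of `Multiplicative (Fin 2 → ℤ)` (the multiplicative version of `ℤ²`)
given by an invertible integer matrix acting by `mulVec`. -/
def matAutFun (A : GL (Fin 2) ℤ) : MulAut (Multiplicative (Fin 2 → ℤ)) where
  toFun v := Multiplicative.ofAdd ((A : Matrix (Fin 2) (Fin 2) ℤ).mulVec v.toAdd)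
  invFun v := Multiplicative.ofAdd ((↑A⁻¹ : Matrix (Fin 2) (Fin 2) ℤ).mulVec v.toAdd)
  left_inv v := by
    show Multiplicative.ofAdd ((↑A⁻¹ : Matrix (Fin 2) (Fin 2) ℤ).mulVec ((A : Matrix (Fin 2) (Fin 2) ℤ).mulVec (Multiplicative.toAdd v))) = v
    rw [Matrix.mulVec_mulVec, ← Units.val_mul, inv_mul_cancel, Units.val_one, Matrix.one_mulVec]
    rfl
  right_inv v := by
    show Multiplicative.ofAdd ((A : Matrix (Fin 2) (Fin 2) ℤ).mulVec ((↑A⁻¹ : Matrix (Fin 2) (Fin 2) ℤ).mulVec (Multiplicative.toAdd v))) = v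
    rw [Matrix.mulVec_mulVec, ← Units.val_mul, mul_inv_cancel, Units.val_one, Matrix.one_mulVec]
    rfl
  map_mul' u v := congrArg Multiplicative.ofAdd (Matrix.mulVec_add _ _ _)

/-- `GL(2,ℤ) → Aut(ℤ²)`, as a homomorphism into multiplicative automorphisms. -/
def matAut : GL (Fin 2) ℤ →* MulAut (Multiplicative (Fin 2 → ℤ)) where
  toFun := matAutFun
  map_one' := by ext v; simp [matAutFun, Matrix.one_mulVec]
  map_mul' A B := by
    refine MulEquiv.ext fun v => ?_
    show Multiplicative.ofAdd (((A * B : GL (Fin 2) ℤ) : Matrix (Fin 2) (Fin 2) ℤ).mulVec (Multiplicative.toAdd v)) =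
      Multiplicative.ofAdd ((A : Matrix (Fin 2) (Fin 2) ℤ).mulVec ((B : Matrix (Fin 2) (Fin 2) ℤ).mulVec (Multiplicative.toAdd v)))
    rw [Matrix.mulVec_mulVec, Units.val_mul]

/-- The semidirect product `ℤ² ⋊_φ ℤ`, where the generator of `ℤ` acts by the matrix `φ`. -/
abbrev TorusBundleGroup (φ : GL (Fin 2) ℤ) : Type :=
  SemidirectProduct (Multiplicative (Fin 2 → ℤ)) (Multiplicative ℤ)
    (zpowersHom (MulAut (Multiplicative (Fin 2 → ℤ))) (matAut φ))

/-- Any three vectors in `ℤ × ℤ` satisfy a nontrivial linear relation. -/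
lemma dep3 (a b c : ℤ × ℤ) :
    ∃ x y z : ℤ, ¬(x = 0 ∧ y = 0 ∧ z = 0) ∧ x • a + y • b + z • c = 0 := by
  by_cases hd : a.1 * b.2 - a.2 * b.1 = 0
  · by_cases h1 : a.1 = 0
    · by_cases h2 : a.2 = 0
      · refine ⟨1, 0, 0, by simp, ?_⟩
        have ha : a = 0 := Prod.ext h1 h2
        simp [ha]
      · refine ⟨b.2, -a.2, 0, fun h => h2 (by simpa using h.2.1), ?_⟩
        refine Prod.ext ?_ ?_ <;> simp [Prod.ext_iff] <;> nlinarith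
    · refine ⟨b.1, -a.1, 0, fun h => h1 (by simpa using h.2.1), ?_⟩
      refine Prod.ext ?_ ?_ <;> simp [Prod.ext_iff] <;> nlinarith
  · refine ⟨b.1 * c.2 - b.2 * c.1, c.1 * a.2 - c.2 * a.1, a.1 * b.2 - a.2 * b.1,
      fun h => hd h.2.2, ?_⟩
    refine Prod.ext ?_ ?_ <;> simp <;> ring

/-- Multiplicative version of `dep3`. -/
lemma dep3' (u v w : Multiplicative (ℤ × ℤ)) :
    ∃ x y z : ℤ, ¬(x = 0 ∧ y = 0 ∧ z = 0) ∧ u ^ x * v ^ y * w ^ z = 1 := by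
  obtain ⟨x, y, z, h1, h2⟩ := dep3 u.toAdd v.toAdd w.toAdd
  refine ⟨x, y, z, h1, ?_⟩
  apply Multiplicative.toAdd.injective
  rw [toAdd_mul, toAdd_mul, toAdd_zpow, toAdd_zpow, toAdd_zpow, toAdd_one]
  exact h2

/-- A singular 2×2 integer matrix kills some nonzero integer vector. -/
lemma exists_kervec (M : Matrix (Fin 2) (Fin 2) ℤ) (h : M.det = 0) :
    ∃ v : Fin 2 → ℤ, v ≠ 0 ∧ M.mulVec v = 0 := by
  rw [Matrix.det_fin_two] at h
  by_cases hA : M 0 0 = 0 ∧ M 0 1 = 0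
  · by_cases hB : M 1 0 = 0 ∧ M 1 1 = 0
    · refine ⟨![1, 0], ?_, ?_⟩
      · intro hv; simpa using congrFun hv 0
      · funext i; fin_cases i <;>
          simp [Matrix.mulVec, dotProduct, Fin.sum_univ_two, hA.1, hA.2, hB.1, hB.2]
    · refine ⟨![M 1 1, -(M 1 0)], ?_, ?_⟩
      · intro hv
        exact hB ⟨by simpa using congrFun hv 1, by simpa using congrFun hv 0⟩
      · funext i; fin_cases i <;>
          simp [Matrix.mulVec, dotProduct, Fin.sum_univ_two, hA.1, hA.2] <;> ring
  · refine ⟨![M 0 1, -(M 0 0)], ?_, ?_⟩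
    · intro hv
      exact hA ⟨by simpa using congrFun hv 1, by simpa using congrFun hv 0⟩
    · funext i; fin_cases i <;>
        simp [Matrix.mulVec, dotProduct, Fin.sum_univ_two] <;> nlinarith [h]

/-- A 2×2 integer matrix with nonzero determinant has trivial kernel. -/
lemma mulVec_inj (M : Matrix (Fin 2) (Fin 2) ℤ) (hdet : M.det ≠ 0)
    (v : Fin 2 → ℤ) (h : M.mulVec v = 0) : v = 0 := by
  have h2 : (M.adjugate * M).mulVec v = M.adjugate.mulVec (M.mulVec v) :=
    (Matrix.mulVec_mulVec _ _ _).symm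
  rw [Matrix.adjugate_mul, h, Matrix.mulVec_zero, Matrix.smul_mulVec,
    Matrix.one_mulVec] at h2
  funext i
  have h3 := congrFun h2 i
  simp only [Pi.smul_apply, smul_eq_mul, Pi.zero_apply] at h3 ⊢
  exact (mul_eq_zero.mp h3).resolve_left hdet

/-- If `φ ∈ GL(2,ℤ)` fixes no nonzero vector of `ℤ²`, then the fiber subgroup `ℤ² × {0}`
is the unique normal subgroup of `E = ℤ² ⋊_φ ℤ` isomorphic to `ℤ ⊕ ℤ` with quotient
isomorphic to `ℤ`. -/
theorem unique_fiber_subgroup (φ : GL (Fin 2) ℤ)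
    (hfix : ∀ v : Fin 2 → ℤ, v ≠ 0 → (φ : Matrix (Fin 2) (Fin 2) ℤ).mulVec v ≠ v)
    (N : Subgroup (TorusBundleGroup φ)) [N.Normal]
    (hN : Nonempty (N ≃* Multiplicative (ℤ × ℤ)))
    (hQ : Nonempty ((TorusBundleGroup φ ⧸ N) ≃* Multiplicative ℤ)) :
    N = (SemidirectProduct.inl :
      Multiplicative (Fin 2 → ℤ) →* TorusBundleGroup φ).range := by
  obtain ⟨e⟩ := hN
  obtain ⟨q⟩ := hQ
  set M : Matrix (Fin 2) (Fin 2) ℤ := (φ : Matrix (Fin 2) (Fin 2) ℤ) - 1 with hM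
  have hdet : M.det ≠ 0 := by
    intro h
    obtain ⟨v, hv, hker⟩ := exists_kervec M h
    apply hfix v hv
    have : (φ : Matrix (Fin 2) (Fin 2) ℤ).mulVec v - v = 0 := by
      simpa [hM, Matrix.sub_mulVec, Matrix.one_mulVec] using hker
    exact sub_eq_zero.mp this
  -- commutators lie in N, since E/N is commutative
  have habQ : ∀ g h : TorusBundleGroup φ, g * h * g⁻¹ * h⁻¹ ∈ N := by
    intro g h
    have hc : (QuotientGroup.mk g : TorusBundleGroup φ ⧸ N) * QuotientGroup.mk h
        = QuotientGroup.mk h * QuotientGroup.mk g := by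
      apply q.injective
      simp only [_root_.map_mul]
      exact mul_comm _ _
    rw [← QuotientGroup.eq_one_iff]
    have h1 : (QuotientGroup.mk (g * h * g⁻¹ * h⁻¹) : TorusBundleGroup φ ⧸ N)
        = QuotientGroup.mk g * QuotientGroup.mk h * (QuotientGroup.mk g)⁻¹
          * (QuotientGroup.mk h)⁻¹ := rfl
    rw [h1, hc]
    group
  have hcomm : ∀ w : Fin 2 → ℤ,
      (SemidirectProduct.inl (Multiplicative.ofAdd (M.mulVec w)) : TorusBundleGroup φ) ∈ N := by
    intro w
    have key := SemidirectProduct.inl_aut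
      (φ := zpowersHom (MulAut (Multiplicative (Fin 2 → ℤ))) (matAut φ))
      (Multiplicative.ofAdd (1 : ℤ)) (Multiplicative.ofAdd w)
    have h1 : ((zpowersHom (MulAut (Multiplicative (Fin 2 → ℤ))) (matAut φ))
          (Multiplicative.ofAdd (1 : ℤ))) (Multiplicative.ofAdd w)
        = Multiplicative.ofAdd ((φ : Matrix (Fin 2) (Fin 2) ℤ).mulVec w) := by
      simp [matAut, matAutFun]
    have h2 := habQ (SemidirectProduct.inr (Multiplicative.ofAdd (1 : ℤ)))
      (SemidirectProduct.inl (Multiplicative.ofAdd w))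
    have h3 : SemidirectProduct.inr (Multiplicative.ofAdd (1 : ℤ))
          * SemidirectProduct.inl (Multiplicative.ofAdd w)
          * (SemidirectProduct.inr (Multiplicative.ofAdd (1 : ℤ)))⁻¹
          * (SemidirectProduct.inl (Multiplicative.ofAdd w))⁻¹
        = (SemidirectProduct.inl (Multiplicative.ofAdd (M.mulVec w)) : TorusBundleGroup φ) := by
      rw [← _root_.map_inv SemidirectProduct.inr, ← key, h1, ← _root_.map_inv SemidirectProduct.inl,
        ← _root_.map_mul]
      congr 1
      apply Multiplicative.toAdd.injective
      simp only [toAdd_mul, toAdd_inv, toAdd_ofAdd, hM]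
      rw [Matrix.sub_mulVec, Matrix.one_mulVec, sub_eq_add_neg]
    rwa [h3] at h2
  -- the fiber is contained in N
  have hBle : (SemidirectProduct.inl :
      Multiplicative (Fin 2 → ℤ) →* TorusBundleGroup φ).range ≤ N := by
    rintro _ ⟨u, rfl⟩
    have hd : (SemidirectProduct.inl (Multiplicative.ofAdd (M.det • u.toAdd))
        : TorusBundleGroup φ) ∈ N := by
      have h4 := hcomm (M.adjugate.mulVec u.toAdd)
      rwa [Matrix.mulVec_mulVec, Matrix.mul_adjugate, Matrix.smul_mulVec,
        Matrix.one_mulVec] at h4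
    have hzp : (SemidirectProduct.inl u : TorusBundleGroup φ) ^ M.det ∈ N := by
      have heq : (SemidirectProduct.inl u : TorusBundleGroup φ) ^ M.det
          = SemidirectProduct.inl (Multiplicative.ofAdd (M.det • u.toAdd)) := by
        rw [← _root_.map_zpow]
        congr 1
      rw [heq]
      exact hd
    rw [← QuotientGroup.eq_one_iff]
    have hq1 : ((QuotientGroup.mk (SemidirectProduct.inl u) :
        TorusBundleGroup φ ⧸ N)) ^ M.det = 1 := by
      rw [← QuotientGroup.mk_zpow]
      exact (QuotientGroup.eq_one_iff _).mpr hzp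
    have h5 := congrArg q hq1
    rw [_root_.map_zpow, _root_.map_one] at h5
    have h6 := congrArg Multiplicative.toAdd h5
    simp only [toAdd_zpow, toAdd_one, smul_eq_mul] at h6
    have h7 : (q (QuotientGroup.mk (SemidirectProduct.inl u))).toAdd = 0 :=
      (mul_eq_zero.mp h6).resolve_left hdet
    apply q.injective
    rw [_root_.map_one]
    apply Multiplicative.toAdd.injective
    simpa using h7
  -- N is contained in the fiber
  have hAle : N ≤ (SemidirectProduct.inl :
      Multiplicative (Fin 2 → ℤ) →* TorusBundleGroup φ).range := by
    rw [SemidirectProduct.range_inl_eq_ker_rightHom]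
    intro n hn
    rw [MonoidHom.mem_ker]
    by_contra hk
    have hkz : (SemidirectProduct.rightHom n).toAdd ≠ 0 := by
      intro h
      exact hk (by apply Multiplicative.toAdd.injective; simpa using h)
    set a := M.mulVec (Pi.single 0 1) with ha'
    set b := M.mulVec (Pi.single 1 1) with hb'
    have ha : (SemidirectProduct.inl (Multiplicative.ofAdd a) : TorusBundleGroup φ) ∈ N :=
      hcomm _
    have hb : (SemidirectProduct.inl (Multiplicative.ofAdd b) : TorusBundleGroup φ) ∈ N :=
      hcomm _
    obtain ⟨x, y, z, hxyz, hrel⟩ := dep3' (e ⟨_, ha⟩) (e ⟨_, hb⟩) (e ⟨n, hn⟩)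
    have hrelN : (⟨_, ha⟩ : N) ^ x * (⟨_, hb⟩ : N) ^ y * (⟨n, hn⟩ : N) ^ z = 1 := by
      apply e.injective
      simpa [_root_.map_mul, _root_.map_zpow, _root_.map_one] using hrel
    have hrelE : (SemidirectProduct.inl (Multiplicative.ofAdd a) : TorusBundleGroup φ) ^ x
        * (SemidirectProduct.inl (Multiplicative.ofAdd b) : TorusBundleGroup φ) ^ y
        * n ^ z = 1 := by
      have h8 := congrArg (Subtype.val) hrelN
      simpa using h8
    have hz0 : z = 0 := by
      have h9 := congrArg SemidirectProduct.rightHom hrelE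
      simp only [_root_.map_mul, _root_.map_zpow, SemidirectProduct.rightHom_inl, _root_.map_one,
        _root_.one_zpow, one_mul] at h9
      have h10 := congrArg Multiplicative.toAdd h9
      simp only [toAdd_zpow, toAdd_one, smul_eq_mul] at h10
      exact (mul_eq_zero.mp h10).resolve_right hkz
    rw [hz0, zpow_zero, mul_one] at hrelE
    have hpow : ∀ (v : Fin 2 → ℤ) (k : ℤ),
        (Multiplicative.ofAdd v) ^ k = Multiplicative.ofAdd (k • v) := by
      intro v k
      apply Multiplicative.toAdd.injective
      simp [toAdd_zpow]
    have hab : x • a + y • b = 0 := by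
      have h11 : (SemidirectProduct.inl (Multiplicative.ofAdd (x • a + y • b))
          : TorusBundleGroup φ) = 1 := by
        rw [ofAdd_add, _root_.map_mul, ← hpow, ← hpow, _root_.map_zpow, _root_.map_zpow]
        exact hrelE
      have h12 : Multiplicative.ofAdd (x • a + y • b) = 1 :=
        SemidirectProduct.inl_injective (by rw [h11, _root_.map_one])
      have h13 := congrArg Multiplicative.toAdd h12
      simpa using h13
    have hvec : M.mulVec (x • Pi.single 0 1 + y • Pi.single 1 1) = 0 := by
      rw [Matrix.mulVec_add, Matrix.mulVec_smul, Matrix.mulVec_smul, ← ha', ← hb']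
      exact hab
    have hv0 : (x • Pi.single 0 1 + y • Pi.single 1 1 : Fin 2 → ℤ) = 0 :=
      mulVec_inj M hdet _ hvec
    have hx : x = 0 := by
      have h14 := congrFun hv0 0
      simpa using h14
    have hy : y = 0 := by
      have h15 := congrFun hv0 1
      simpa using h15
    exact hxyz ⟨hx, hy, hz0⟩
  exact le_antisymm hAle hBle
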